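/- For ε ∈ {1, −1} and integers 0 ≤ a ≤ b, the double sum Σ_{s=0}^{a} Σ_{r=s−a}^{b−s} ε^r·(a − b + 2r) equals: a+1 if ε = −1, a is odd and b is even; −(b+1) if ε = −1, a is even and b is odd; and 0 in all other cases (in particular whenever ε = 1 or a ≡ b mod 2). -/

import Mathlib

lemma sum_Icc_int_aux (m : ℤ) (N : ℕ) (f : ℤ → ℤ) :
    ∑ r ∈ Finset.Icc m (m + N), f r = ∑ k ∈ Finset.range (N+1), f (m + k) := by
  have h : Finset.Icc m (m + (N:ℤ)) =
      Finset.map ⟨fun k : ℕ => m + (k:ℤ), fun x y h => by simpa using h⟩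
        (Finset.range (N+1)) := by
    ext r
    simp only [Finset.mem_Icc, Finset.mem_map, Finset.mem_range, Function.Embedding.coeFn_mk]
    dsimp only [DFunLike.coe, Function.instFunLikeEmbedding]
    constructor
    · intro hr; exact ⟨(r - m).toNat, by omega, by omega⟩
    · rintro ⟨k, hk, rfl⟩; omega
  rw [h, Finset.sum_map]
  rfl

lemma sumB_aux (c : ℤ) (m : ℕ) :
    ∑ k ∈ Finset.range (m+1), (-1:ℤ)^k * (c - 2*k) = if Even m then c - m else (m:ℤ)+1 := by
  induction m with
  | zero => simp
  | succ n ih =>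
    rw [Finset.sum_range_succ, ih]
    rcases Nat.even_or_odd n with h | h
    · rw [if_pos h, if_neg (by simp [Nat.even_add_one, h]), (h.add_one).neg_one_pow]
      push_cast; ring
    · rw [if_neg (by simp [Nat.not_even_iff_odd, h]),
        if_pos (by simp [Nat.even_add_one, Nat.not_even_iff_odd, h]), (h.add_one).neg_one_pow]
      push_cast; ring

lemma sumC_aux (c : ℤ) (m : ℕ) :
    ∑ k ∈ Finset.range (m+1), (c + 2*k) = (m+1) * (c + m) := by
  induction m with
  | zero => simp
  | succ n ih =>
    rw [Finset.sum_range_succ, ih]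
    push_cast; ring

lemma zpow_neg_one_parity_aux (r : ℤ) (n : ℕ) (h : Even r ↔ Even n) :
    (((-1:ℤˣ) ^ r : ℤˣ) : ℤ) = (-1:ℤ)^n := by
  rcases Nat.even_or_odd n with hn | hn
  · rw [(h.mpr hn).neg_one_zpow, hn.neg_one_pow]; rfl
  · have hr : Odd r := by
      rw [Int.odd_iff]
      rw [Nat.odd_iff] at hn
      rw [Int.even_iff, Nat.even_iff] at h
      omega
    obtain ⟨k, rfl⟩ := hr
    rw [zpow_add, zpow_mul, show ((-1:ℤˣ)^(2:ℤ)) = 1 by decide, one_zpow, hn.neg_one_pow]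
    rfl

/-- For `ε ∈ {1, −1}` (encoded as a unit of `ℤ`) and integers
`0 ≤ a ≤ b`, the double sum `Σ_{s=0}^{a} Σ_{r=s−a}^{b−s} ε^r (a − b + 2r)` equals
`a+1` if `ε = −1`, `a` odd, `b` even; `−(b+1)` if `ε = −1`, `a` even, `b` odd;
and `0` in all other cases. -/
theorem double_sum_eval (ε : ℤˣ) (a b : ℕ) (hab : a ≤ b) :
    (∑ s ∈ Finset.range (a + 1), ∑ r ∈ Finset.Icc ((s : ℤ) - (a : ℤ)) ((b : ℤ) - (s : ℤ)),
        ((ε ^ r : ℤˣ) : ℤ) * ((a : ℤ) - (b : ℤ) + 2 * r)) =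
      if ε = -1 ∧ Odd a ∧ Even b then (a : ℤ) + 1
      else if ε = -1 ∧ Even a ∧ Odd b then -((b : ℤ) + 1)
      else 0 := by
  rcases Int.units_eq_one_or ε with rfl | rfl
  · -- ε = 1 : every inner sum vanishes
    rw [if_neg (fun h => absurd h.1 (by decide)), if_neg (fun h => absurd h.1 (by decide))]
    apply Finset.sum_eq_zero
    intro s hs
    have hs' : s ≤ a := Nat.lt_succ_iff.mp (Finset.mem_range.mp hs)
    have hM : (b:ℤ) - s = ((s:ℤ) - a) + ((a + b - 2*s : ℕ) : ℤ) := by push_cast; omega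
    rw [hM, sum_Icc_int_aux]
    simp only [one_zpow, Units.val_one, one_mul]
    have : ∀ k ∈ Finset.range ((a + b - 2*s) + 1),
        ((a:ℤ) - b + 2 * (((s:ℤ) - a) + k)) = (-((a + b - 2*s : ℕ) : ℤ) + 2 * k) := by
      intro k _; ring_nf; omega
    rw [Finset.sum_congr rfl this, sumC_aux]
    push_cast; ring
  · -- ε = -1
    have key : ∀ s ∈ Finset.range (a + 1),
        (∑ r ∈ Finset.Icc ((s : ℤ) - (a : ℤ)) ((b : ℤ) - (s : ℤ)),
          (((-1:ℤˣ) ^ r : ℤˣ) : ℤ) * ((a : ℤ) - (b : ℤ) + 2 * r)) =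
        (-1:ℤ)^(a+s) * (if Even (a+b) then 0 else -(((a:ℤ)+b-2*s)+1)) := by
      intro s hs
      have hs' : s ≤ a := Nat.lt_succ_iff.mp (Finset.mem_range.mp hs)
      set M : ℕ := a + b - 2*s with hMdef
      have hMc : (M:ℤ) = (a:ℤ) + b - 2*s := by push_cast [hMdef]; omega
      have hM : (b:ℤ) - s = ((s:ℤ) - a) + (M : ℤ) := by omega
      rw [hM, sum_Icc_int_aux]
      have step : ∀ k ∈ Finset.range (M + 1),
          (((-1:ℤˣ) ^ (((s:ℤ) - a) + k) : ℤˣ) : ℤ) * ((a:ℤ) - b + 2 * (((s:ℤ) - a) + k)) =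
          (-1:ℤ)^(a+s) * (-((-1:ℤ)^k * ((M:ℤ) - 2*k))) := by
        intro k _
        have hpar : Even (((s:ℤ) - a) + k) ↔ Even (a + s + k) := by
          rw [Int.even_iff, Nat.even_iff]; omega
        rw [zpow_neg_one_parity_aux _ _ hpar, pow_add]
        have : ((a:ℤ) - b + 2 * (((s:ℤ) - a) + k)) = -((M:ℤ) - 2*k) := by omega
        rw [this]; ring
      rw [Finset.sum_congr rfl step, ← Finset.mul_sum, Finset.sum_neg_distrib, sumB_aux]
      have hMpar : Even M ↔ Even (a+b) := by
        rw [Nat.even_iff, Nat.even_iff]; omega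
      rcases Nat.even_or_odd (a+b) with h | h
      · rw [if_pos (hMpar.mpr h), if_pos h]; ring
      · rw [if_neg (by simpa [hMpar, Nat.not_even_iff_odd] using h),
          if_neg (by simp [Nat.not_even_iff_odd, h])]
        rw [hMc]
    rw [Finset.sum_congr rfl key]
    rcases Nat.even_or_odd (a+b) with h | h
    · -- same parity: everything is zero
      rw [if_neg, if_neg]
      · simp [h]
      · rintro ⟨-, ha, hb⟩
        rw [Nat.even_iff] at h ha; rw [Nat.odd_iff] at hb; omega
      · rintro ⟨-, ha, hb⟩
        rw [Nat.even_iff] at h hb; rw [Nat.odd_iff] at ha; omega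
    · -- opposite parity
      have step2 : ∀ s ∈ Finset.range (a+1),
          (-1:ℤ)^(a+s) * (if Even (a+b) then 0 else -(((a:ℤ)+b-2*s)+1)) =
          (-1:ℤ)^(a+1) * ((-1:ℤ)^s * (((a:ℤ)+b+1) - 2*s)) := by
        intro s _
        rw [if_neg (by simp [Nat.not_even_iff_odd, h]), pow_add, pow_add]
        push_cast; ring
      rw [Finset.sum_congr rfl step2, ← Finset.mul_sum, sumB_aux]
      rcases Nat.even_or_odd a with ha | ha
      · have hb : Odd b := by
          rw [Nat.odd_iff] at h ⊢; rw [Nat.even_iff] at ha; omega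
        rw [if_pos ha, if_neg (fun hc => (Nat.not_even_iff_odd.mpr hc.2.1) ha),
          if_pos ⟨rfl, ha, hb⟩, (ha.add_one).neg_one_pow]
        push_cast; ring
      · have hb : Even b := by
          rw [Nat.odd_iff] at h ha; rw [Nat.even_iff]; omega
        rw [if_neg (Nat.not_even_iff_odd.mpr ha), if_pos ⟨rfl, ha, hb⟩,
          (ha.add_one).neg_one_pow]
        push_cast; ring
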